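/- Let S be the set of n×n matrices with entries in {0,1} having exactly E entries equal to 1, where 0 < E < n². Define d₁(A,B) = 1 − (1/E)·Σ_{i,j} A_{ij}B_{ij}. Then d₁ satisfies the triangle inequality: for all A, B, C ∈ S, d₁(A,B) + d₁(B,C) ≥ d₁(A,C). -/
import Mathlib

/-- d₁ satisfies the triangle inequality on n×n binary matrices with exactly E ones. -/
theorem stmt2 (n E : ℕ) (hE : 0 < E) (hEn : E < n ^ 2)
    (A B C : Matrix (Fin n) (Fin n) ℕ)
    (hA01 : ∀ i j, A i j = 0 ∨ A i j = 1) (hB01 : ∀ i j, B i j = 0 ∨ B i j = 1)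
    (hC01 : ∀ i j, C i j = 0 ∨ C i j = 1)
    (hAE : ∑ i, ∑ j, A i j = E) (hBE : ∑ i, ∑ j, B i j = E) (hCE : ∑ i, ∑ j, C i j = E) :
    (1 - (1 / (E : ℝ)) * ∑ i, ∑ j, (A i j : ℝ) * (C i j : ℝ)) ≤
      (1 - (1 / (E : ℝ)) * ∑ i, ∑ j, (A i j : ℝ) * (B i j : ℝ)) +
      (1 - (1 / (E : ℝ)) * ∑ i, ∑ j, (B i j : ℝ) * (C i j : ℝ)) := by
  have hE' : (0 : ℝ) < E := by exact_mod_cast hE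
  have key : (∑ i, ∑ j, (A i j : ℝ) * (B i j : ℝ)) + (∑ i, ∑ j, (B i j : ℝ) * (C i j : ℝ))
      ≤ (E : ℝ) + ∑ i, ∑ j, (A i j : ℝ) * (C i j : ℝ) := by
    have hB : (∑ i, ∑ j, (B i j : ℝ)) = (E : ℝ) := by
      rw [← hBE]; push_cast; rfl
    rw [← hB, ← Finset.sum_add_distrib, ← Finset.sum_add_distrib]
    apply Finset.sum_le_sum
    intro i _
    rw [← Finset.sum_add_distrib, ← Finset.sum_add_distrib]
    apply Finset.sum_le_sum
    intro j _
    rcases hA01 i j with h1 | h1 <;> rcases hB01 i j with h2 | h2 <;>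
      rcases hC01 i j with h3 | h3 <;> simp [h1, h2, h3]
  have h1 : (1 / (E : ℝ)) * ((∑ i, ∑ j, (A i j : ℝ) * (B i j : ℝ)) +
      (∑ i, ∑ j, (B i j : ℝ) * (C i j : ℝ))) ≤
      (1 / (E : ℝ)) * ((E : ℝ) + ∑ i, ∑ j, (A i j : ℝ) * (C i j : ℝ)) :=
    mul_le_mul_of_nonneg_left key (by positivity)
  have h2 : (1 / (E : ℝ)) * (E : ℝ) = 1 := by field_simp
  nlinarith [h1, h2]
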